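/- Let p_X and p_Z' be probability density functions on measurable spaces (with Lebesgue measure), let D be a measurable function with values in (0,1), and write f := D on the support of p_X and g' := 1 − D∘g on the support of p_Z'. If the original GAN generator loss V(D,g) := ∫ p_X log D dμ + ∫ p_Z' log(1 − D∘g) dμ is finite, then lim_{α ↓ 1} V_α(D,g) = V(D,g), where V_α(D,g) := (1/(α−1)) log(∫ p_X D^{α−1} dμ) + (1/(α−1)) log(∫ p_Z' (1 − D∘g)^{α−1} dμ) is the Rényi GAN generator loss of order α; that is, the negative sum of the two Rényi cross-entropy functionals converges to the negative sum of the two Shannon cross-entropy functionals as α tends to 1 from above. -/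

import Mathlib

open MeasureTheory Filter Topology Set

private lemma rpow_slope_bound {c t : ℝ} (hc : c ∈ Set.Ioo (0:ℝ) 1) (ht : 0 < t) :
    |(c ^ t - 1) / t| ≤ |Real.log c| := by
  have hc0 := hc.1
  have hc1 := hc.2
  have hlog : Real.log c < 0 := Real.log_neg hc0 hc1
  have hle : c ^ t ≤ 1 := Real.rpow_le_one hc0.le hc1.le ht.le
  have hexp : c ^ t = Real.exp (t * Real.log c) := by
    rw [Real.rpow_def_of_pos hc0, mul_comm]
  have h1 : 1 - c ^ t ≤ -(t * Real.log c) := by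
    have := Real.add_one_le_exp (t * Real.log c)
    rw [hexp]; linarith
  rw [abs_div, abs_of_pos ht, abs_of_nonpos (by linarith : c ^ t - 1 ≤ 0),
    abs_of_nonpos hlog.le, div_le_iff₀ ht]
  nlinarith

private lemma rpow_slope_tendsto {c : ℝ} (hc : 0 < c) :
    Tendsto (fun t : ℝ => (c ^ t - 1) / t) (𝓝[>] (0:ℝ)) (𝓝 (Real.log c)) := by
  have h : HasDerivAt (fun t : ℝ => c ^ t) (Real.log c) 0 := by
    simpa using (Real.hasStrictDerivAt_const_rpow hc 0).hasDerivAt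
  rw [hasDerivAt_iff_tendsto_slope] at h
  have h2 := h.mono_left (nhdsWithin_mono 0 (fun x hx => (ne_of_gt hx : x ≠ 0)))
  refine h2.congr' ?_
  filter_upwards [self_mem_nhdsWithin] with t ht
  simp [slope_def_field, Real.rpow_zero]

private lemma renyi_tendsto {E : Type*} [MeasurableSpace E] {μ : Measure E}
    (p f : E → ℝ) (S : Set E) (hS : MeasurableSet S)
    (hp_meas : Measurable p) (hp_nonneg : ∀ x, 0 ≤ p x)
    (hf_meas : Measurable f) (hf_range : ∀ x ∈ S, f x ∈ Set.Ioo (0:ℝ) 1)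
    (hp_int : IntegrableOn p S μ) (hp_one : ∫ x in S, p x ∂μ = 1)
    (hlog_int : IntegrableOn (fun x => p x * Real.log (f x)) S μ) :
    Tendsto (fun t : ℝ => (1 / t) * Real.log (∫ x in S, p x * f x ^ t ∂μ))
      (𝓝[>] (0:ℝ)) (𝓝 (∫ x in S, p x * Real.log (f x) ∂μ)) := by
  set F : ℝ → ℝ := fun t => ∫ x in S, p x * f x ^ t ∂μ with hF
  set L : ℝ := ∫ x in S, p x * Real.log (f x) ∂μ with hL
  have hF0 : F 0 = 1 := by
    simp only [hF, Real.rpow_zero, mul_one]; exact hp_one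
  -- integrability of p * f^t for t ≥ 0
  have hint : ∀ t : ℝ, 0 ≤ t → IntegrableOn (fun x => p x * f x ^ t) S μ := by
    intro t ht
    refine Integrable.mono' hp_int
      ((hp_meas.mul (by measurability : Measurable fun x => f x ^ t)).aestronglyMeasurable) ?_
    refine (ae_restrict_iff' hS).2 (ae_of_all _ fun x hx => ?_)
    have h1 := hf_range x hx
    have hpos : 0 < f x ^ t := Real.rpow_pos_of_pos h1.1 t
    have hle : f x ^ t ≤ 1 := Real.rpow_le_one h1.1.le h1.2.le ht
    rw [Real.norm_eq_abs, abs_mul, abs_of_nonneg (hp_nonneg x), abs_of_pos hpos]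
    nlinarith [hp_nonneg x]
  -- dominated convergence for the slope integrand
  have hslope : Tendsto (fun t : ℝ => ∫ x in S, p x * ((f x ^ t - 1) / t) ∂μ)
      (𝓝[>] (0:ℝ)) (𝓝 L) := by
    refine tendsto_integral_filter_of_dominated_convergence
      (fun x => |p x * Real.log (f x)|) ?_ ?_ hlog_int.abs ?_
    · filter_upwards with t
      exact ((hp_meas.mul (((by measurability : Measurable fun x => f x ^ t).sub measurable_const).div_const t)).aestronglyMeasurable)
    · filter_upwards [self_mem_nhdsWithin] with t ht
      refine (ae_restrict_iff' hS).2 (ae_of_all _ fun x hx => ?_)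
      have h1 := hf_range x hx
      rw [Real.norm_eq_abs, abs_mul, abs_mul, abs_of_nonneg (hp_nonneg x)]
      exact mul_le_mul_of_nonneg_left (rpow_slope_bound h1 ht) (hp_nonneg x)
    · refine (ae_restrict_iff' hS).2 (ae_of_all _ fun x hx => ?_)
      exact (rpow_slope_tendsto (hf_range x hx).1).const_mul (p x)
  -- F has right derivative L at 0
  have hDeriv : HasDerivWithinAt F L (Ici (0:ℝ)) 0 := by
    rw [hasDerivWithinAt_iff_tendsto_slope, Ici_sdiff_left]
    refine hslope.congr' ?_
    filter_upwards [self_mem_nhdsWithin] with t ht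
    have hsub : F t - F 0 = ∫ x in S, p x * (f x ^ t - 1) ∂μ := by
      rw [hF, ← integral_sub (hint t (le_of_lt ht)) (by simpa using (hint 0 le_rfl).integrable)]
      congr 1; funext x; simp [Real.rpow_zero]; ring
    have : (fun x => p x * ((f x ^ t - 1) / t)) = fun x => (p x * (f x ^ t - 1)) / t := by
      funext x; ring
    rw [this, integral_div, ← hsub, slope_def_field]
    simp [div_eq_mul_inv]
  -- compose with log
  have hlog1 : HasDerivAt Real.log 1 (F 0) := by
    rw [hF0]; simpa using Real.hasDerivAt_log one_ne_zero
  have hcomp : HasDerivWithinAt (fun t => Real.log (F t)) (1 * L) (Ici (0:ℝ)) 0 :=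
    hlog1.comp_hasDerivWithinAt 0 hDeriv
  rw [hasDerivWithinAt_iff_tendsto_slope, Ici_sdiff_left, one_mul] at hcomp
  refine hcomp.congr' ?_
  filter_upwards [self_mem_nhdsWithin] with t ht
  rw [slope_def_field, hF0, Real.log_one]
  ring

/-- Rényi GAN generator loss converges to the original GAN loss as `α ↓ 1`.
Let `pX` (on `X ⊆ ℝ^n`) and `pZ` (on `Z ⊆ ℝ^m`) be probability densities
(w.r.t. Lebesgue measure), let `D` be measurable with `D ∈ (0,1)` on the relevant
supports, and let `g` be a measurable generator.  If the original GAN generator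
loss `V(D,g) = ∫ pX log D + ∫ pZ log(1 - D∘g)` is finite (both integrands are
integrable), then the Rényi GAN generator loss of order `α`,
`V_α(D,g) = (1/(α-1)) log ∫ pX D^(α-1) + (1/(α-1)) log ∫ pZ (1 - D∘g)^(α-1)`,
tends to `V(D,g)` as `α ↓ 1`. -/
theorem stmt_14 {n m : ℕ}
    (pX : (Fin n → ℝ) → ℝ) (pZ : (Fin m → ℝ) → ℝ)
    (X : Set (Fin n → ℝ)) (Z : Set (Fin m → ℝ))
    (hX : MeasurableSet X) (hZ : MeasurableSet Z)
    (hpX_meas : Measurable pX) (hpZ_meas : Measurable pZ)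
    (hpX_nonneg : ∀ x, 0 ≤ pX x) (hpZ_nonneg : ∀ z, 0 ≤ pZ z)
    (hpX_pos : ∀ x ∈ X, 0 < pX x) (hpZ_pos : ∀ z ∈ Z, 0 < pZ z)
    (hpX_int : IntegrableOn pX X) (hpZ_int : IntegrableOn pZ Z)
    (hpX_one : ∫ x in X, pX x = 1) (hpZ_one : ∫ z in Z, pZ z = 1)
    (D : (Fin n → ℝ) → ℝ) (g : (Fin m → ℝ) → (Fin n → ℝ))
    (hD_meas : Measurable D) (hg_meas : Measurable g)
    (hD_range : ∀ x ∈ X, D x ∈ Set.Ioo (0 : ℝ) 1)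
    (hDg_range : ∀ z ∈ Z, D (g z) ∈ Set.Ioo (0 : ℝ) 1)
    (hV_fin₁ : IntegrableOn (fun x => pX x * Real.log (D x)) X)
    (hV_fin₂ : IntegrableOn (fun z => pZ z * Real.log (1 - D (g z))) Z) :
    Tendsto (fun α : ℝ =>
        (1 / (α - 1)) * Real.log (∫ x in X, pX x * D x ^ (α - 1)) +
        (1 / (α - 1)) * Real.log (∫ z in Z, pZ z * (1 - D (g z)) ^ (α - 1)))
      (𝓝[>] 1)
      (𝓝 ((∫ x in X, pX x * Real.log (D x)) +
          ∫ z in Z, pZ z * Real.log (1 - D (g z)))) := by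
  have hsub : Tendsto (fun α : ℝ => α - 1) (𝓝[>] (1:ℝ)) (𝓝[>] (0:ℝ)) := by
    apply tendsto_nhdsWithin_of_tendsto_nhds_of_eventually_within
    · have : Tendsto (fun α : ℝ => α - 1) (𝓝 (1:ℝ)) (𝓝 (0:ℝ)) := by
        simpa using (continuous_sub_right (1:ℝ)).tendsto 1
      exact this.mono_left nhdsWithin_le_nhds
    · filter_upwards [self_mem_nhdsWithin] with a ha
      exact sub_pos.2 (Set.mem_Ioi.1 ha)
  have h1 := renyi_tendsto pX D X hX hpX_meas hpX_nonneg hD_meas hD_range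
    hpX_int hpX_one hV_fin₁
  have h2 := renyi_tendsto pZ (fun z => 1 - D (g z)) Z hZ hpZ_meas hpZ_nonneg
    (measurable_const.sub (hD_meas.comp hg_meas))
    (fun z hz => ⟨show (0:ℝ) < 1 - D (g z) by linarith [(hDg_range z hz).2],
      show (1:ℝ) - D (g z) < 1 by linarith [(hDg_range z hz).1]⟩)
    hpZ_int hpZ_one hV_fin₂
  exact (h1.comp hsub).add (h2.comp hsub)
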